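/- arXiv:1003.2951 — 4 statements merged into one kernel-verified Lean document; each statement's English description precedes it below -/
import Mathlib

section
/- Let I ⊆ S be a saturated Borel ideal, ≺ any term order, and p > q positive integers. If I ∩ 𝕋_p is a segment with respect to ≺, then I ∩ 𝕋_q is a segment with respect to ≺. -/
open Polynomial

/-- Exponent vectors of monomials (terms) of `S = K[x_0, …, x_n]`. -/
abbrev Expo (n : ℕ) := Fin (n + 1) → ℕ

/-- The degree of a term. -/
def deg {n : ℕ} (α : Expo n) : ℕ := ∑ i, α i

/-- The exponent vector of the variable `x_i`. -/
def sing {n : ℕ} (i : Fin (n + 1)) : Expo n := Pi.single i 1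

/-- `MoveDown α β` : the term `α` is obtained from `β` by an elementary move `e_j^-`,
i.e. `α = x_{j-1}·β/x_j` for some `j ≥ 1` with `β_j > 0`. -/
def MoveDown {n : ℕ} (α β : Expo n) : Prop :=
  ∃ j k : Fin (n + 1), (k : ℕ) + 1 = (j : ℕ) ∧ α + sing j = β + sing k

/-- The Borel (partial) order `α <_B β` : transitive closure of elementary moves `e_j^-`. -/
def BorelLt {n : ℕ} (α β : Expo n) : Prop := Relation.TransGen MoveDown α β

/-- A Borel set: a set of terms closed upwards under the Borel order. -/
def IsBorelSet {n : ℕ} (B : Set (Expo n)) : Prop :=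
  ∀ α β : Expo n, α ∈ B → MoveDown α β → β ∈ B

/-- A monomial ideal, identified with its set of terms: closed under multiplication
by arbitrary terms. -/
def IsMonIdeal {n : ℕ} (M : Set (Expo n)) : Prop :=
  ∀ α ∈ M, ∀ γ : Expo n, α + γ ∈ M

/-- A Borel ideal: a monomial ideal which is a Borel set in every degree. -/
def IsBorelIdeal {n : ℕ} (M : Set (Expo n)) : Prop :=
  IsMonIdeal M ∧ IsBorelSet M

/-- `𝒩(M)_t` : the set of degree-`t` terms not lying in `M`. -/
def coIdeal {n : ℕ} (M : Set (Expo n)) (t : ℕ) : Set (Expo n) :=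
  {α | deg α = t ∧ α ∉ M}

/-- `p` is the Hilbert polynomial of `S/M` : `|𝒩(M)_t| = p(t)` for all `t` large. -/
def HasHilbPoly {n : ℕ} (M : Set (Expo n)) (p : Polynomial ℚ) : Prop :=
  ∃ N : ℕ, ∀ t : ℕ, N ≤ t → ((coIdeal M t).ncard : ℚ) = p.eval (t : ℚ)

/-- Saturation for monomial ideals: a term `α` with `x_i^{k_i}·α ∈ M` for suitable
powers of every variable already lies in `M`. -/
def IsSaturatedIdeal {n : ℕ} (M : Set (Expo n)) : Prop :=
  ∀ α : Expo n, (∀ i : Fin (n + 1), ∃ k : ℕ, α + k • sing i ∈ M) → α ∈ M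

/-- A term order on the terms of `S`: a multiplicative (strict) total order with `1`
as least element and `x_0 ≺ x_1 ≺ … ≺ x_n`. -/
structure TermOrder (n : ℕ) where
  lt : Expo n → Expo n → Prop
  irrefl : ∀ a : Expo n, ¬ lt a a
  trans : ∀ a b c : Expo n, lt a b → lt b c → lt a c
  total : ∀ a b : Expo n, a ≠ b → lt a b ∨ lt b a
  add_right : ∀ a b c : Expo n, lt a b → lt (a + c) (b + c)
  zero_lt : ∀ a : Expo n, a ≠ 0 → lt 0 a
  var_lt : ∀ i j : Fin (n + 1), i < j → lt (sing i) (sing j)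

/-- `M ∩ 𝕋_t` is a segment w.r.t. the order `lt`. -/
def IsSegmentAt {n : ℕ} (lt : Expo n → Expo n → Prop) (M : Set (Expo n)) (t : ℕ) : Prop :=
  ∀ τ σ : Expo n, τ ∈ M → deg τ = t → deg σ = t → lt τ σ → σ ∈ M

/-- `M` is a segment ideal w.r.t. the order `lt`. -/
def IsSegmentIdeal {n : ℕ} (lt : Expo n → Expo n → Prop) (M : Set (Expo n)) : Prop :=
  ∀ t : ℕ, IsSegmentAt lt M t

/-- `α` is a minimal monomial generator of the monomial ideal `M`. -/
def IsMinGen {n : ℕ} (M : Set (Expo n)) (α : Expo n) : Prop :=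
  α ∈ M ∧ ∀ β γ : Expo n, β + γ = α → β ∈ M → γ = 0

/-- The ideal generated by the elements of `M` of degree `≤ s - 1`. -/
def genBelow {n : ℕ} (M : Set (Expo n)) (s : ℕ) : Set (Expo n) :=
  {x | ∃ α γ : Expo n, α ∈ M ∧ deg α < s ∧ x = α + γ}

/-- `M` is a gen-segment ideal w.r.t. `lt`: for every `s` the minimal generators of
degree `s` are the greatest among the degree-`s` terms not in `⟨M_{≤ s-1}⟩`. -/
def IsGenSegment {n : ℕ} (lt : Expo n → Expo n → Prop) (M : Set (Expo n)) : Prop :=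
  ∀ α : Expo n, IsMinGen M α → ∀ σ : Expo n, deg σ = deg α →
    σ ∉ genBelow M (deg α) → ¬ IsMinGen M σ → lt σ α

/-- `δ` is the maximal degree of a minimal monomial generator of `M`. -/
def IsMaxGenDeg {n : ℕ} (M : Set (Expo n)) (δ : ℕ) : Prop :=
  (∃ α : Expo n, IsMinGen M α ∧ deg α = δ) ∧ ∀ α : Expo n, IsMinGen M α → deg α ≤ δ

/-- `p` is an admissible polynomial with Gotzmann decomposition of length `r`
(so `r` is its Gotzmann number):
`p(z) = ∑_{i=1}^{r} binom(z + a_i - (i-1), a_i)` with `a_1 ≥ … ≥ a_r ≥ 0`. -/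
def IsGotzmannDecomp (p : Polynomial ℚ) (r : ℕ) : Prop :=
  ∃ a : Fin r → ℕ, Antitone a ∧
    ∀ t : ℕ, r ≤ t →
      p.eval (t : ℚ) = ∑ i : Fin r, ((t + a i - (i : ℕ)).choose (a i) : ℚ)

/-- An admissible polynomial: one admitting a Gotzmann decomposition. -/
def IsAdmissible (p : Polynomial ℚ) : Prop := ∃ r : ℕ, IsGotzmannDecomp p r

/-- Setting `x_0 = x_1 = 1` in a term. -/
def trunc01 {n : ℕ} (α : Expo n) : Expo n := fun i => if (i : ℕ) ≤ 1 then 0 else α i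

/-- The `x_1`-saturation of a monomial ideal: the ideal generated by the minimal
generators with `x_0 = x_1 = 1`. -/
def xOneSat {n : ℕ} (M : Set (Expo n)) : Set (Expo n) :=
  {x | ∃ α γ : Expo n, IsMinGen M α ∧ x = trunc01 α + γ}

/-- The lexicographic comparison (intended for terms of equal degree):
`α ≺_lex β` iff `α_k < β_k` at the largest index `k` where they differ. -/
def LexLt {n : ℕ} (α β : Expo n) : Prop :=
  ∃ k : Fin (n + 1), α k < β k ∧ ∀ j : Fin (n + 1), k < j → α j = β j

/-- The reverse lexicographic comparison (intended for terms of equal degree):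
`α ≺_revlex β` iff `α_h > β_h` at the smallest index `h` where they differ. -/
def RevLexLt {n : ℕ} (α β : Expo n) : Prop :=
  ∃ h : Fin (n + 1), β h < α h ∧ ∀ j : Fin (n + 1), j < h → α j = β j

/-- A graded term order. -/
def IsGraded {n : ℕ} (ord : TermOrder n) : Prop :=
  ∀ α β : Expo n, deg α < deg β → ord.lt α β

/-- A reverse term order: a graded term order such that, on terms of equal degree,
a strictly larger exponent of `x_0` makes a term strictly smaller. -/
def IsReverseOrder {n : ℕ} (ord : TermOrder n) : Prop :=
  IsGraded ord ∧ ∀ α β : Expo n, deg α = deg β → β 0 < α 0 → ord.lt α β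

lemma deg_add {n : ℕ} (α β : Expo n) : deg (α + β) = deg α + deg β := by
  simp [deg, Finset.sum_add_distrib]

lemma deg_smul_sing {n : ℕ} (m : ℕ) (i : Fin (n + 1)) : deg (m • sing i) = m := by
  have : (m • sing i : Expo n) = Pi.single i m := by
    funext j
    simp [sing, Pi.single_apply]
  rw [deg, this]
  simp

lemma borel_step {n : ℕ} {B : Set (Expo n)} (hB : IsBorelSet B) (β : Expo n)
    (j k : Fin (n + 1)) (h : (k : ℕ) + 1 = (j : ℕ)) (hm : β + sing k ∈ B) :
    β + sing j ∈ B := by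
  refine hB _ _ hm ⟨j, k, h, ?_⟩
  abel

lemma borel_lift {n : ℕ} {B : Set (Expo n)} (hB : IsBorelSet B) (β : Expo n)
    (i : Fin (n + 1)) (h0 : β + sing 0 ∈ B) : β + sing i ∈ B := by
  suffices H : ∀ m : ℕ, ∀ i : Fin (n + 1), (i : ℕ) = m → β + sing i ∈ B from
    H (i : ℕ) i rfl
  intro m
  induction m with
  | zero =>
    intro i hi
    have : i = 0 := Fin.ext (by simpa using hi)
    rwa [this]
  | succ m ih =>
    intro i hi
    have hmlt : m < n + 1 := by omega
    exact borel_step hB β i ⟨m, hmlt⟩ (by simp [hi]) (ih ⟨m, hmlt⟩ rfl)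

lemma borel_transfer {n : ℕ} {B : Set (Expo n)} (hB : IsBorelSet B) (σ : Expo n)
    (i : Fin (n + 1)) : ∀ a b : ℕ, σ + a • sing 0 + b • sing i ∈ B →
    σ + (a + b) • sing i ∈ B := by
  intro a
  induction a with
  | zero =>
    intro b h
    simpa using h
  | succ a ih =>
    intro b h
    have h' : (σ + a • sing 0 + b • sing i) + sing 0 ∈ B := by
      have : (σ + a • sing 0 + b • sing i) + sing 0
          = σ + (a + 1) • sing 0 + b • sing i := by
        rw [add_smul, one_smul]; abel
      rwa [this]
    have h'' := borel_lift hB _ i h'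
    have h3 : (σ + a • sing 0 + b • sing i) + sing i
        = σ + a • sing 0 + (b + 1) • sing i := by
      rw [add_smul, one_smul]; abel
    rw [h3] at h''
    have := ih (b + 1) h''
    rwa [show a + 1 + b = a + (b + 1) by omega]

/-- If `I` is a saturated Borel ideal, `≺` a term order and `p > q` positive
integers such that `I ∩ 𝕋_p` is a segment, then `I ∩ 𝕋_q` is a segment. -/
theorem segment_descends {n : ℕ} (I : Set (Expo n)) (hI : IsBorelIdeal I)
    (hsat : IsSaturatedIdeal I) (ord : TermOrder n)
    (p q : ℕ) (hq : 0 < q) (hpq : q < p)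
    (hseg : IsSegmentAt ord.lt I p) :
    IsSegmentAt ord.lt I q := by
  intro τ σ hτ hdτ hdσ hlt
  set m := p - q with hm
  have hτ' : τ + m • sing 0 ∈ I := hI.1 τ hτ _
  have hdeg : ∀ α : Expo n, deg α = q → deg (α + m • sing 0) = p := by
    intro α hα
    rw [deg_add, hα, deg_smul_sing]; omega
  have hσ' : σ + m • sing 0 ∈ I :=
    hseg _ _ hτ' (hdeg τ hdτ) (hdeg σ hdσ) (ord.add_right _ _ _ hlt)
  apply hsat σ
  intro i
  refine ⟨m, ?_⟩
  have := borel_transfer hI.2 σ i m 0 (by simpa using hσ')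
  simpa using this
end

section
/- Let J ⊆ S be a monomial ideal and suppose there exist an integer t and four terms x^α, x^β ∈ 𝒩(J)_t and x^γ, x^δ ∈ J ∩ 𝕋_t with x^{α+β} = x^{γ+δ}. Then for no term order ≺ is J a segment ideal with respect to ≺. -/
open Polynomial

/-- If a monomial ideal `J` admits a degree `t` with terms
`x^α, x^β ∈ 𝒩(J)_t`, `x^γ, x^δ ∈ J ∩ 𝕋_t` and `x^{α+β} = x^{γ+δ}`, then `J` is not
a segment ideal with respect to any term order. -/
theorem not_segment_criterion {n : ℕ} (J : Set (Expo n)) (hJ : IsMonIdeal J)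
    (t : ℕ) (α β γ δ : Expo n)
    (hα : deg α = t) (hβ : deg β = t) (hγ : deg γ = t) (hδ : deg δ = t)
    (hαJ : α ∉ J) (hβJ : β ∉ J) (hγJ : γ ∈ J) (hδJ : δ ∈ J)
    (heq : α + β = γ + δ) :
    ∀ ord : TermOrder n, ¬ IsSegmentIdeal ord.lt J := by
  intro ord hseg
  -- any non-member of degree t is ord.lt any member of degree t
  have key : ∀ σ τ : Expo n, deg σ = t → deg τ = t → σ ∉ J → τ ∈ J → ord.lt σ τ := by
    intro σ τ hσ hτ hσJ hτJ
    have hne : σ ≠ τ := fun h => hσJ (h ▸ hτJ)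
    rcases ord.total σ τ hne with h | h
    · exact h
    · exact absurd (hseg t τ σ hτJ hτ hσ h) hσJ
  have h1 : ord.lt α γ := key α γ hα hγ hαJ hγJ
  have h2 : ord.lt β δ := key β δ hβ hδ hβJ hδJ
  have h3 : ord.lt (α + β) (γ + β) := ord.add_right _ _ _ h1
  have h4 : ord.lt (β + γ) (δ + γ) := ord.add_right _ _ _ h2
  have h5 : ord.lt (α + β) (γ + δ) := by
    rw [add_comm γ β] at h3; rw [add_comm δ γ] at h4
    exact ord.trans _ _ _ h3 h4
  rw [← heq] at h5
  exact ord.irrefl _ h5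
end

section
/- Let I ⊆ S be a nonzero saturated Borel ideal containing a power of x_1 (equivalently, the projective scheme defined by I is 0-dimensional), and ≺ a term order. If I is a reg-segment ideal with respect to ≺ then I is a segment ideal with respect to ≺; hence for such I the notions segment ideal, hilb-segment ideal and reg-segment ideal with respect to ≺ are equivalent. -/
open Polynomial

namespace Seg6

variable {n : ℕ}

lemma deg_add (α β : Expo n) : deg (α + β) = deg α + deg β := by
  simp [deg, Finset.sum_add_distrib]

lemma sing_apply (i j : Fin (n+1)) : sing i j = if j = i then 1 else 0 := by
  simp [sing, Pi.single_apply]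

lemma deg_sing (i : Fin (n+1)) : deg (sing i) = 1 := by
  simp [deg, sing_apply]

lemma deg_nsmul (m : ℕ) (α : Expo n) : deg (m • α) = m * deg α := by
  simp [deg, Finset.mul_sum]

lemma eq_zero_of_deg {α : Expo n} (h : deg α = 0) : α = 0 := by
  have := Finset.sum_eq_zero_iff.mp h
  funext i; exact this i (Finset.mem_univ i)

lemma exists_pos_of_ne_zero {α : Expo n} (h : α ≠ 0) : ∃ j, 0 < α j := by
  by_contra hc
  push_neg at hc
  exact h (funext fun i => by have := hc i; simp only [Pi.zero_apply]; omega)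

lemma deg_pos_of_ne_zero {α : Expo n} (h : α ≠ 0) : 0 < deg α := by
  obtain ⟨j, hj⟩ := exists_pos_of_ne_zero h
  have : α j ≤ deg α := Finset.single_le_sum (f := α) (fun _ _ => Nat.zero_le _) (Finset.mem_univ j)
  omega

/-- remove one unit at coordinate `j` -/
def dec (α : Expo n) (j : Fin (n+1)) : Expo n := fun i => if i = j then α i - 1 else α i

lemma dec_add_sing {α : Expo n} {j : Fin (n+1)} (h : 0 < α j) : dec α j + sing j = α := by
  funext i
  by_cases h' : i = j
  · subst h'; simp [dec, sing_apply]; omega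
  · simp [dec, sing_apply, h']

lemma deg_dec {α : Expo n} {j : Fin (n+1)} (h : 0 < α j) : deg (dec α j) + 1 = deg α := by
  have := dec_add_sing h
  have h2 : deg (dec α j + sing j) = deg α := by rw [this]
  rwa [deg_add, deg_sing] at h2

section Borel

variable {I : Set (Expo n)}

lemma borel_up_aux (hbor : IsBorelSet I) (c : Expo n) :
    ∀ (d : ℕ) (a b : Fin (n+1)), (b : ℕ) = (a : ℕ) + d → c + sing a ∈ I → c + sing b ∈ I := by
  intro d
  induction d with
  | zero =>
    intro a b h hm
    have : a = b := Fin.ext (by omega)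
    rwa [← this]
  | succ d ih =>
    intro a b h hm
    have hb' : (a : ℕ) + d < n + 1 := by have := b.isLt; omega
    set b' : Fin (n+1) := ⟨(a : ℕ) + d, hb'⟩ with hb'def
    have h1 : c + sing b' ∈ I := ih a b' rfl hm
    refine hbor (c + sing b') (c + sing b) h1 ⟨b, b', by simp [hb'def]; omega, ?_⟩
    rw [add_right_comm]

lemma borel_up (hbor : IsBorelSet I) (c : Expo n) {a b : Fin (n+1)} (hab : (a : ℕ) ≤ (b : ℕ))
    (hm : c + sing a ∈ I) : c + sing b ∈ I :=
  borel_up_aux hbor c ((b : ℕ) - (a : ℕ)) a b (by omega) hm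

lemma pow_mem (hbor : IsBorelSet I) {k : ℕ} {e1 : Fin (n+1)} (he1 : (e1 : ℕ) = 1)
    (hx1 : k • sing e1 ∈ I) {i : Fin (n+1)} (hi : 1 ≤ (i : ℕ)) : k • sing i ∈ I := by
  have key : ∀ m, m ≤ k → (k - m) • sing e1 + m • sing i ∈ I := by
    intro m
    induction m with
    | zero => intro _; simpa using hx1
    | succ m ih =>
      intro hm
      have prev := ih (by omega)
      have hsplit : (k - m) • sing e1 + m • sing i
          = ((k - (m+1)) • sing e1 + m • sing i) + sing e1 := by
        rw [add_right_comm]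
        congr 1
        rw [show k - m = (k - (m+1)) + 1 by omega, succ_nsmul]
      rw [hsplit] at prev
      have := borel_up hbor ((k - (m+1)) • sing e1 + m • sing i) (a := e1) (b := i) (by omega) prev
      rw [add_assoc] at this
      rwa [show m • sing i + sing i = (m+1) • sing i from (succ_nsmul _ _).symm] at this
  have := key k le_rfl
  simpa using this

end Borel

section Sat

variable {I : Set (Expo n)} {k : ℕ} {e1 : Fin (n+1)}

lemma sing_ne_zero (i : Fin (n+1)) : sing i ≠ (0 : Expo n) := by
  intro h
  have := congrFun h i
  simp [sing_apply] at this

lemma mem_of_x0 (hmon : IsMonIdeal I) (hbor : IsBorelSet I) (hsat : IsSaturatedIdeal I)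
    (he1 : (e1 : ℕ) = 1) (hx1 : k • sing e1 ∈ I) {α : Expo n}
    (h : α + sing 0 ∈ I) : α ∈ I := by
  apply hsat
  intro i
  by_cases hi : (i : ℕ) = 0
  · have : i = 0 := Fin.ext (by simpa using hi)
    exact ⟨1, by rw [this, one_smul]; exact h⟩
  · refine ⟨k, ?_⟩
    have hki : k • sing i ∈ I := pow_mem hbor he1 hx1 (by omega)
    have := hmon _ hki α
    rwa [add_comm]

lemma notMem_add_nsmul_x0 (hmon : IsMonIdeal I) (hbor : IsBorelSet I) (hsat : IsSaturatedIdeal I)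
    (he1 : (e1 : ℕ) = 1) (hx1 : k • sing e1 ∈ I) {α : Expo n} (h : α ∉ I) (m : ℕ) :
    α + m • sing 0 ∉ I := by
  induction m with
  | zero => simpa using h
  | succ m ih =>
    intro hc
    apply ih
    apply mem_of_x0 hmon hbor hsat he1 hx1
    rw [add_assoc, ← succ_nsmul]
    exact hc

lemma exists_minGen_aux (I : Set (Expo n)) :
    ∀ (d : ℕ) (α : Expo n), deg α ≤ d → α ∈ I → ∃ g γ : Expo n, IsMinGen I g ∧ g + γ = α := by
  intro d
  induction d with
  | zero =>
    intro α hd hα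
    by_cases h : IsMinGen I α
    · exact ⟨α, 0, h, add_zero α⟩
    · exfalso
      simp only [IsMinGen, not_and] at h
      push_neg at h
      obtain ⟨β, γ, hβγ, hβ, hγ⟩ := h hα
      have h1 : deg β + deg γ = deg α := by rw [← deg_add, hβγ]
      have := deg_pos_of_ne_zero hγ
      omega
  | succ d ih =>
    intro α hd hα
    by_cases h : IsMinGen I α
    · exact ⟨α, 0, h, add_zero α⟩
    · simp only [IsMinGen, not_and] at h
      push_neg at h
      obtain ⟨β, γ, hβγ, hβ, hγ⟩ := h hα
      have h1 : deg β + deg γ = deg α := by rw [← deg_add, hβγ]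
      have h2 := deg_pos_of_ne_zero hγ
      obtain ⟨g, γ', hg, hgγ⟩ := ih β (by omega) hβ
      exact ⟨g, γ' + γ, hg, by rw [← add_assoc, hgγ, hβγ]⟩

lemma exists_minGen {I : Set (Expo n)} {α : Expo n} (hα : α ∈ I) :
    ∃ g γ : Expo n, IsMinGen I g ∧ g + γ = α :=
  exists_minGen_aux I (deg α) α le_rfl hα

lemma minGen_x0_eq_zero (hmon : IsMonIdeal I) (hbor : IsBorelSet I) (hsat : IsSaturatedIdeal I)
    (he1 : (e1 : ℕ) = 1) (hx1 : k • sing e1 ∈ I) {g : Expo n} (hg : IsMinGen I g) :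
    g 0 = 0 := by
  by_contra h
  have hpos : 0 < g 0 := by omega
  have hds : dec g 0 + sing 0 = g := dec_add_sing hpos
  have hdm : dec g 0 ∈ I := mem_of_x0 hmon hbor hsat he1 hx1 (by rw [hds]; exact hg.1)
  have := hg.2 (dec g 0) (sing 0) hds hdm
  exact sing_ne_zero 0 this

end Sat

section Free

variable {I : Set (Expo n)} {k : ℕ} {e1 : Fin (n+1)} {δ : ℕ}

lemma free_mem (hmon : IsMonIdeal I) (hbor : IsBorelSet I) (hsat : IsSaturatedIdeal I)
    (he1 : (e1 : ℕ) = 1) (hx1 : k • sing e1 ∈ I) (hδ : IsMaxGenDeg I δ)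
    {α : Expo n} (h0 : α 0 = 0) (hdeg : δ ≤ deg α) : α ∈ I := by
  by_contra hα
  classical
  have hex : ∃ m, α + m • sing e1 ∈ I := ⟨k, by have := hmon _ hx1 α; rwa [add_comm] at this⟩
  set m := Nat.find hex with hmdef
  have hm : α + m • sing e1 ∈ I := Nat.find_spec hex
  have hlt : ∀ m' < m, α + m' • sing e1 ∉ I := fun m' h' => Nat.find_min hex h'
  have hm1 : 1 ≤ m := by
    rcases Nat.eq_zero_or_pos m with h | h
    · exfalso; apply hα; have h2 := hm; rw [h] at h2; simpa using h2
    · exact h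
  set g : Expo n := α + m • sing e1 with hgdef
  have he10 : (0 : Fin (n+1)) ≠ e1 := by
    intro hh
    have := congrArg Fin.val hh
    rw [he1] at this
    simp at this
  have hge1 : g e1 = α e1 + m := by simp [hgdef, sing_apply]
  have hg0 : g 0 = 0 := by simp [hgdef, sing_apply, h0, he10]
  have hmin : IsMinGen I g := by
    refine ⟨hm, ?_⟩
    intro b c hbc hb
    by_contra hc
    obtain ⟨j, hj⟩ := exists_pos_of_ne_zero hc
    have hgj : 0 < g j := by
      have := congrFun hbc j
      simp only [Pi.add_apply] at this
      omega
    have hj0 : (0:ℕ) < (j:ℕ) := by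
      rcases Nat.eq_zero_or_pos (j:ℕ) with h | h
      · exfalso
        have hj' : j = 0 := Fin.ext (by simp [h])
        rw [hj'] at hgj
        omega
      · exact h
    have hge1pos : 0 < g e1 := by omega
    have hdece1 : dec g e1 = α + (m-1) • sing e1 := by
      funext i
      by_cases hie : i = e1
      · subst hie; simp [dec, hgdef, sing_apply]; omega
      · simp [dec, hie, hgdef, sing_apply]
    have hdece1_not : dec g e1 ∉ I := by rw [hdece1]; exact hlt (m-1) (by omega)
    have hdecj_not : dec g j ∉ I := by
      by_cases hje : j = e1
      · rw [hje]; exact hdece1_not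
      · intro hmem
        apply hdece1_not
        have hnej : ¬ (e1 = j) := fun h => hje h.symm
        have hdgj_e1 : 0 < (dec g j) e1 := by
          have : (dec g j) e1 = g e1 := by simp [dec, hnej]
          omega
        have h1 : dec (dec g j) e1 + sing e1 = dec g j := dec_add_sing hdgj_e1
        have h2 : dec (dec g j) e1 + sing j = dec g e1 := by
          funext i
          by_cases hij : i = j
          · subst hij
            simp [dec, sing_apply, hje]
            omega
          · by_cases hie : i = e1
            · subst hie
              simp [dec, sing_apply, hnej, fun h => hij h]
            · simp [dec, sing_apply, hij, hie]
        rw [← h1] at hmem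
        have := borel_up hbor (dec (dec g j) e1) (a := e1) (b := j) (by omega) hmem
        rwa [h2] at this
    have h3 : b + dec c j = dec g j := by
      funext i
      have hbci := congrFun hbc i
      simp only [Pi.add_apply] at hbci
      by_cases hij : i = j
      · subst hij; simp [dec]; omega
      · simp [dec, hij]; omega
    exact hdecj_not (h3 ▸ hmon b hb (dec c j))
  have hle := hδ.2 g hmin
  have hdg : deg g = deg α + m := by rw [hgdef, deg_add, deg_nsmul, deg_sing, mul_one]
  omega

end Free

section Count

variable {I : Set (Expo n)} {k : ℕ} {e1 : Fin (n+1)} {δ : ℕ}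

lemma div_chain (g : Expo n) :
    ∀ (m d : ℕ), d + m = deg g → ∃ b : Expo n, (∃ c, b + c = g) ∧ deg b = d := by
  intro m
  induction m with
  | zero => exact fun d h => ⟨g, ⟨0, add_zero g⟩, by omega⟩
  | succ m ih =>
    intro d h
    obtain ⟨b', ⟨c', hbc⟩, hdb⟩ := ih (d+1) (by omega)
    have hb'ne : b' ≠ 0 := by
      intro hz
      rw [hz] at hdb
      simp [deg] at hdb
    obtain ⟨j, hj⟩ := exists_pos_of_ne_zero hb'ne
    refine ⟨dec b' j, ⟨sing j + c', ?_⟩, ?_⟩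
    · rw [← add_assoc, dec_add_sing hj, hbc]
    · have := deg_dec hj
      omega

/-- the x₀-free part of the complement -/
def Nset (I : Set (Expo n)) : Set (Expo n) := {β | β 0 = 0 ∧ β ∉ I}

lemma Nset_bounded (hmon : IsMonIdeal I) (hbor : IsBorelSet I)
    (he1 : (e1 : ℕ) = 1) (hx1 : k • sing e1 ∈ I) {β : Expo n} (hβ : β ∈ Nset I) :
    ∀ i, β i ≤ k := by
  intro i
  by_contra hbig
  push_neg at hbig
  by_cases hi : (i : ℕ) = 0
  · have h0' : i = 0 := Fin.ext (by simpa using hi)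
    rw [h0'] at hbig
    have := hβ.1
    omega
  · have hki : k • sing i ∈ I := pow_mem hbor he1 hx1 (by omega)
    apply hβ.2
    have hdecomp : k • sing i + (fun i' => β i' - k • sing i i') = β := by
      funext i'
      simp only [Pi.add_apply, Pi.smul_apply, sing_apply, smul_eq_mul]
      by_cases hii : i' = i
      · subst hii; simp; omega
      · simp [hii]
    rw [← hdecomp]
    exact hmon _ hki _
  
lemma Nset_finite (hmon : IsMonIdeal I) (hbor : IsBorelSet I)
    (he1 : (e1 : ℕ) = 1) (hx1 : k • sing e1 ∈ I) : (Nset I).Finite := by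
  apply Set.Finite.subset (Set.Finite.pi (fun i : Fin (n+1) => Set.finite_Iic k))
  intro β hβ
  rw [Set.mem_univ_pi]
  exact fun i => Set.mem_Iic.mpr (Nset_bounded hmon hbor he1 hx1 hβ i)

lemma Nset_deg_le (hmon : IsMonIdeal I) (hbor : IsBorelSet I)
    (he1 : (e1 : ℕ) = 1) (hx1 : k • sing e1 ∈ I) {β : Expo n} (hβ : β ∈ Nset I) :
    deg β ≤ (n+1) * k := by
  have : deg β ≤ ∑ _i : Fin (n+1), k :=
    Finset.sum_le_sum (fun i _ => Nset_bounded hmon hbor he1 hx1 hβ i)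
  simpa using this

/-- δ ≤ |N| -/
lemma delta_le_ncard (hmon : IsMonIdeal I) (hbor : IsBorelSet I) (hsat : IsSaturatedIdeal I)
    (he1 : (e1 : ℕ) = 1) (hx1 : k • sing e1 ∈ I) (hδ : IsMaxGenDeg I δ) :
    δ ≤ (Nset I).ncard := by
  classical
  obtain ⟨g, hg, hdg⟩ := hδ.1
  have hg0 : g 0 = 0 := minGen_x0_eq_zero hmon hbor hsat he1 hx1 hg
  have hchain : ∀ d : Fin δ, ∃ b : Expo n, (∃ c, b + c = g) ∧ deg b = (d : ℕ) :=
    fun d => div_chain g (δ - d) d (by have := d.isLt; omega)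
  choose f hf hdf using hchain
  have hfN : ∀ d, f d ∈ Nset I := by
    intro d
    obtain ⟨c, hc⟩ := hf d
    constructor
    · have := congrFun hc 0
      simp only [Pi.add_apply] at this
      omega
    · intro hfI
      have := hg.2 (f d) c hc hfI
      rw [this, add_zero] at hc
      have := hdf d
      rw [hc, hdg] at this
      have := d.isLt
      omega
  have hinj : Function.Injective f := by
    intro d1 d2 h
    have : deg (f d1) = deg (f d2) := by rw [h]
    rw [hdf d1, hdf d2] at this
    exact Fin.ext this
  have hcard : (Finset.univ.image f).card = δ := by
    rw [Finset.card_image_of_injective _ hinj, Finset.card_fin]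
  have hsub : ↑(Finset.univ.image f) ⊆ Nset I := by
    intro x hx
    simp only [Finset.coe_image, Set.mem_image, Finset.mem_coe, Finset.mem_univ] at hx
    obtain ⟨d, _, rfl⟩ := hx
    exact hfN d
  calc δ = (Finset.univ.image f).card := hcard.symm
    _ = (↑(Finset.univ.image f) : Set (Expo n)).ncard := (Set.ncard_coe_finset _).symm
    _ ≤ (Nset I).ncard := Set.ncard_le_ncard hsub (Nset_finite hmon hbor he1 hx1)

end Count

section Count2

variable {I : Set (Expo n)} {k : ℕ} {e1 : Fin (n+1)} {δ : ℕ}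

lemma coIdeal_eq_image (hmon : IsMonIdeal I) (hbor : IsBorelSet I) (hsat : IsSaturatedIdeal I)
    (he1 : (e1 : ℕ) = 1) (hx1 : k • sing e1 ∈ I) (t : ℕ) :
    coIdeal I t = (fun β => β + (t - deg β) • sing 0) '' {β | β ∈ Nset I ∧ deg β ≤ t} := by
  ext α
  constructor
  · rintro ⟨hdeg, hα⟩
    set β : Expo n := fun i => if i = 0 then 0 else α i with hβdef
    have hdecomp : β + (α 0) • sing 0 = α := by
      funext i
      by_cases hi : i = 0
      · subst hi; simp [hβdef, sing_apply]
      · simp [hβdef, sing_apply, hi]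
    have hβ0 : β 0 = 0 := by simp [hβdef]
    have hβI : β ∉ I := fun hb => hα (by rw [← hdecomp]; exact hmon _ hb _)
    have hdb : deg β + α 0 = t := by
      have h2 : deg (β + (α 0) • sing 0) = deg β + α 0 := by
        rw [deg_add, deg_nsmul, deg_sing, mul_one]
      rw [hdecomp] at h2
      omega
    refine ⟨β, ⟨⟨hβ0, hβI⟩, by omega⟩, ?_⟩
    show β + (t - deg β) • sing 0 = α
    rw [show t - deg β = α 0 by omega]
    exact hdecomp
  · rintro ⟨β, ⟨⟨hβ0, hβI⟩, hdegle⟩, rfl⟩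
    constructor
    · show deg (β + (t - deg β) • sing 0) = t
      rw [deg_add, deg_nsmul, deg_sing]
      omega
    · exact notMem_add_nsmul_x0 hmon hbor hsat he1 hx1 hβI _

lemma inj_on_shift (t : ℕ) :
    Set.InjOn (fun β : Expo n => β + (t - deg β) • sing 0) {β | β ∈ Nset I ∧ deg β ≤ t} := by
  intro β1 h1 β2 h2 heq
  have heq' : β1 + (t - deg β1) • sing 0 = β2 + (t - deg β2) • sing 0 := heq
  funext i
  by_cases hi : i = 0
  · subst hi; rw [h1.1.1, h2.1.1]
  · have h3 := congrFun heq' i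
    simp only [Pi.add_apply, Pi.smul_apply, sing_apply, smul_eq_mul, hi, if_neg hi,
      mul_zero, add_zero] at h3
    exact h3

lemma coIdeal_ncard (hmon : IsMonIdeal I) (hbor : IsBorelSet I) (hsat : IsSaturatedIdeal I)
    (he1 : (e1 : ℕ) = 1) (hx1 : k • sing e1 ∈ I) {t : ℕ} (ht : (n+1) * k ≤ t) :
    (coIdeal I t).ncard = (Nset I).ncard := by
  rw [coIdeal_eq_image hmon hbor hsat he1 hx1 t, Set.ncard_image_of_injOn (inj_on_shift t)]
  congr 1
  ext β
  simp only [Set.mem_setOf_eq, and_iff_left_iff_imp]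
  intro hβ
  exact le_trans (Nset_deg_le hmon hbor he1 hx1 hβ) ht

lemma le_choose (a : ℕ) (ha : 1 ≤ a) (t : ℕ) : t + 1 ≤ (t + a).choose a := by
  induction a with
  | zero => omega
  | succ a ih =>
    rcases Nat.eq_zero_or_pos a with h | h
    · subst h
      simp [Nat.choose_one_right]
    · calc t + 1 ≤ (t + a).choose a := ih h
        _ ≤ (t + a).choose a + (t + a).choose (a + 1) := Nat.le_add_right _ _
        _ = (t + a + 1).choose (a + 1) := (Nat.choose_succ_succ _ _).symm
        _ = (t + (a + 1)).choose (a + 1) := by rw [add_assoc]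

lemma ncard_eq_r (hmon : IsMonIdeal I) (hbor : IsBorelSet I) (hsat : IsSaturatedIdeal I)
    (he1 : (e1 : ℕ) = 1) (hx1 : k • sing e1 ∈ I) {p : Polynomial ℚ} {r : ℕ}
    (hp : HasHilbPoly I p) (hr : IsGotzmannDecomp p r) (h0 : (0 : Expo n) ∉ I) :
    (Nset I).ncard = r := by
  obtain ⟨N0, hN0⟩ := hp
  obtain ⟨a, hanti, ha⟩ := hr
  have hfin := Nset_finite hmon hbor he1 hx1
  have hpos : 1 ≤ (Nset I).ncard :=
    (Set.ncard_pos hfin).mpr ⟨0, rfl, h0⟩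
  rcases Nat.eq_zero_or_pos r with hr0 | hrpos
  · exfalso
    subst hr0
    set t := max N0 ((n+1)*k) with htdef
    have e1' := hN0 t (le_max_left _ _)
    rw [coIdeal_ncard hmon hbor hsat he1 hx1 (le_max_right _ _)] at e1'
    have e2 := ha t (Nat.zero_le _)
    simp only [Finset.univ_eq_empty, Finset.sum_empty] at e2
    rw [e2] at e1'
    have : (Nset I).ncard = 0 := by exact_mod_cast e1'
    omega
  · have z : Fin r := ⟨0, hrpos⟩
    have ha0 : a ⟨0, hrpos⟩ = 0 := by
      by_contra hne
      have ha1 : 1 ≤ a ⟨0, hrpos⟩ := by omega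
      set T := N0 + (n+1)*k + r + (Nset I).ncard with hTdef
      have e1' := hN0 T (by omega)
      rw [coIdeal_ncard hmon hbor hsat he1 hx1 (by omega)] at e1'
      have e2 := ha T (by omega)
      have hterm : (T : ℚ) + 1 ≤ (((T + a ⟨0, hrpos⟩ - ((⟨0, hrpos⟩ : Fin r) : ℕ)).choose (a ⟨0, hrpos⟩)) : ℚ) := by
        have h4 := le_choose (a ⟨0, hrpos⟩) ha1 T
        have heq : T + a ⟨0, hrpos⟩ - ((⟨0, hrpos⟩ : Fin r) : ℕ) = T + a ⟨0, hrpos⟩ := by simp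
        rw [heq]
        exact_mod_cast h4
      have hsum : (((T + a ⟨0, hrpos⟩ - ((⟨0, hrpos⟩ : Fin r) : ℕ)).choose (a ⟨0, hrpos⟩)) : ℚ) ≤
          ∑ i : Fin r, (((T + a i - (i : ℕ)).choose (a i) : ℚ)) :=
        Finset.single_le_sum (f := fun i : Fin r => (((T + a i - (i : ℕ)).choose (a i) : ℚ)))
          (fun i _ => by positivity) (Finset.mem_univ (⟨0, hrpos⟩ : Fin r))
      rw [e2] at e1'
      have hge : (T : ℚ) + 1 ≤ ((Nset I).ncard : ℚ) := by
        rw [e1']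
        exact le_trans hterm hsum
      have : T + 1 ≤ (Nset I).ncard := by exact_mod_cast hge
      omega
    have hall : ∀ i : Fin r, a i = 0 := by
      intro i
      have : a i ≤ a ⟨0, hrpos⟩ := hanti (by simp [Fin.le_def])
      omega
    set t := max (max N0 ((n+1)*k)) r with htdef
    have e1' := hN0 t (le_trans (le_max_left _ _) (le_max_left _ _))
    rw [coIdeal_ncard hmon hbor hsat he1 hx1 (le_trans (le_max_right _ _) (le_max_left _ _))] at e1'
    have e2 := ha t (le_max_right _ _)
    have e3 : ∀ i : Fin r, (((t + a i - (i : ℕ)).choose (a i) : ℚ)) = 1 := by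
      intro i
      rw [hall i]
      simp
    rw [e2, Finset.sum_congr rfl (fun i _ => e3 i)] at e1'
    simp only [Finset.sum_const, Finset.card_univ, Fintype.card_fin, nsmul_eq_mul, mul_one] at e1'
    exact_mod_cast e1'

end Count2

section Seg

variable {I : Set (Expo n)} {k : ℕ} {e1 : Fin (n+1)} {δ : ℕ} {ord : TermOrder n}

lemma lt_cancel (ord : TermOrder n) {a b c : Expo n} (h : ord.lt (a + c) (b + c)) :
    ord.lt a b := by
  rcases eq_or_ne a b with rfl | hne
  · exact absurd h (ord.irrefl _)
  · rcases ord.total a b hne with h' | h'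
    · exact h'
    · exact absurd (ord.trans _ _ _ h (ord.add_right _ _ c h')) (ord.irrefl _)

lemma segAt_pred (hmon : IsMonIdeal I) (hbor : IsBorelSet I) (hsat : IsSaturatedIdeal I)
    (he1 : (e1 : ℕ) = 1) (hx1 : k • sing e1 ∈ I)
    {t : ℕ} (h : IsSegmentAt ord.lt I (t+1)) : IsSegmentAt ord.lt I t := by
  intro τ σ hτ hdτ hdσ hlt
  have h1 : τ + sing 0 ∈ I := hmon τ hτ (sing 0)
  have h2 := h (τ + sing 0) (σ + sing 0) h1 (by rw [deg_add, deg_sing, hdτ])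
    (by rw [deg_add, deg_sing, hdσ]) (ord.add_right _ _ _ hlt)
  exact mem_of_x0 hmon hbor hsat he1 hx1 h2

lemma segAt_succ (hmon : IsMonIdeal I) (hbor : IsBorelSet I) (hsat : IsSaturatedIdeal I)
    (he1 : (e1 : ℕ) = 1) (hx1 : k • sing e1 ∈ I) (hδ : IsMaxGenDeg I δ)
    {t : ℕ} (hts : δ ≤ t) (h : IsSegmentAt ord.lt I t) : IsSegmentAt ord.lt I (t+1) := by
  intro τ σ hτ hdτ hdσ hlt
  by_contra hσ
  by_cases hσ0 : σ 0 = 0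
  · exact hσ (free_mem hmon hbor hsat he1 hx1 hδ hσ0 (by omega))
  · have hσpos : 0 < σ 0 := by omega
    have hσ's : dec σ 0 + sing 0 = σ := dec_add_sing hσpos
    have hσ'deg : deg (dec σ 0) = t := by have := deg_dec hσpos; omega
    have hσ'not : dec σ 0 ∉ I := fun hmem => hσ (by rw [← hσ's]; exact hmon _ hmem _)
    by_cases hτ0 : 0 < τ 0
    · have hτ's : dec τ 0 + sing 0 = τ := dec_add_sing hτ0
      have hτ'mem : dec τ 0 ∈ I := mem_of_x0 hmon hbor hsat he1 hx1 (by rw [hτ's]; exact hτ)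
      have hτ'deg : deg (dec τ 0) = t := by have := deg_dec hτ0; omega
      have hlt' : ord.lt (dec τ 0) (dec σ 0) :=
        lt_cancel ord (c := sing 0) (by rw [hτ's, hσ's]; exact hlt)
      exact hσ'not (h (dec τ 0) (dec σ 0) hτ'mem hτ'deg hσ'deg hlt')
    · obtain ⟨g, γ, hg, hgγ⟩ := exists_minGen hτ
      have hgd : deg g ≤ δ := hδ.2 g hg
      have hγne : γ ≠ 0 := by
        intro hz
        rw [hz, add_zero] at hgγ
        rw [hgγ] at hgd
        omega
      obtain ⟨j, hj⟩ := exists_pos_of_ne_zero hγne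
      have hτj : 0 < τ j := by
        have := congrFun hgγ j
        simp only [Pi.add_apply] at this
        omega
      have hj0 : j ≠ 0 := by
        intro hz
        rw [hz] at hτj
        omega
      have hτ's : dec τ j + sing j = τ := dec_add_sing hτj
      have hτ'deg : deg (dec τ j) = t := by have := deg_dec hτj; omega
      have hτ'mem : dec τ j ∈ I := by
        have hdecomp : g + dec γ j = dec τ j := by
          funext i
          have h5 := congrFun hgγ i
          simp only [Pi.add_apply] at h5 ⊢
          by_cases hij : i = j
          · subst hij; simp only [dec]; split_ifs <;> omega
          · simp only [dec, if_neg hij]; omega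
        rw [← hdecomp]
        exact hmon g hg.1 _
      have hjpos : (0 : Fin (n+1)) < j := by
        rw [Fin.lt_def]
        have h6 : (j : ℕ) ≠ 0 := fun hh => hj0 (Fin.ext (by simp [hh]))
        simp
        exact Nat.pos_of_ne_zero h6
      have hv : ord.lt (sing 0) (sing j) := ord.var_lt 0 j hjpos
      have hstep : ord.lt (dec σ 0 + sing 0) (dec σ 0 + sing j) := by
        have := ord.add_right _ _ (dec σ 0) hv
        rwa [add_comm (sing 0) (dec σ 0), add_comm (sing j) (dec σ 0)] at this
      have hlt1 : ord.lt (dec τ j + sing j) (dec σ 0 + sing 0) := by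
        rw [hτ's, hσ's]
        exact hlt
      have hlt2 : ord.lt (dec τ j) (dec σ 0) :=
        lt_cancel ord (c := sing j) (ord.trans _ _ _ hlt1 hstep)
      exact hσ'not (h (dec τ j) (dec σ 0) hτ'mem hτ'deg hσ'deg hlt2)

lemma segAt_down (hmon : IsMonIdeal I) (hbor : IsBorelSet I) (hsat : IsSaturatedIdeal I)
    (he1 : (e1 : ℕ) = 1) (hx1 : k • sing e1 ∈ I) :
    ∀ (d t : ℕ), IsSegmentAt ord.lt I (t + d) → IsSegmentAt ord.lt I t := by
  intro d
  induction d with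
  | zero => exact fun t h => h
  | succ d ih =>
    intro t h
    exact ih t (segAt_pred hmon hbor hsat he1 hx1 h)

lemma segAt_up (hmon : IsMonIdeal I) (hbor : IsBorelSet I) (hsat : IsSaturatedIdeal I)
    (he1 : (e1 : ℕ) = 1) (hx1 : k • sing e1 ∈ I) (hδ : IsMaxGenDeg I δ) :
    ∀ d : ℕ, IsSegmentAt ord.lt I δ → IsSegmentAt ord.lt I (δ + d) := by
  intro d
  induction d with
  | zero => exact fun h => h
  | succ d ih =>
    intro h
    exact segAt_succ hmon hbor hsat he1 hx1 hδ (Nat.le_add_right _ _) (ih h)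

end Seg

end Seg6

open Seg6

/-- For a nonzero saturated Borel ideal `I` containing a power of `x_1`
(so the scheme defined by `I` is 0-dimensional) and a term order `≺`:
reg-segment ⟹ segment ideal; hence segment ideal, hilb-segment and reg-segment are
equivalent (with `r` the Gotzmann number and `δ` the maximal degree of a minimal
generator). -/
theorem segment_equivalences_dim_zero {n : ℕ} (hn : 1 ≤ n)
    (I : Set (Expo n)) (hI : IsBorelIdeal I) (hne : I.Nonempty)
    (hsat : IsSaturatedIdeal I)
    (k : ℕ) (hx1 : k • sing (⟨1, by omega⟩ : Fin (n + 1)) ∈ I)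
    (ord : TermOrder n)
    (p : Polynomial ℚ) (hp : HasHilbPoly I p)
    (r : ℕ) (hr : IsGotzmannDecomp p r)
    (δ : ℕ) (hδ : IsMaxGenDeg I δ) :
    (IsSegmentAt ord.lt I δ → IsSegmentIdeal ord.lt I) ∧
    (IsSegmentIdeal ord.lt I ↔ IsSegmentAt ord.lt I r) ∧
    (IsSegmentAt ord.lt I r ↔ IsSegmentAt ord.lt I δ) := by
  have hmon := hI.1
  have hbor := hI.2
  have he1 : ((⟨1, by omega⟩ : Fin (n+1)) : ℕ) = 1 := rfl
  by_cases h0 : (0 : Expo n) ∈ I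
  · have huniv : ∀ σ : Expo n, σ ∈ I := fun σ => by
      have := hmon 0 h0 σ
      rwa [zero_add] at this
    have hseg : ∀ t, IsSegmentAt ord.lt I t := fun t τ σ _ _ _ _ => huniv σ
    exact ⟨fun _ t => hseg t, ⟨fun _ => hseg r, fun _ t => hseg t⟩,
      ⟨fun _ => hseg δ, fun _ => hseg r⟩⟩
  · have hδr : δ ≤ r := by
      have h1 := delta_le_ncard hmon hbor hsat he1 hx1 hδ
      have h2 := ncard_eq_r hmon hbor hsat he1 hx1 hp hr h0
      omega
    have A : IsSegmentAt ord.lt I δ → IsSegmentIdeal ord.lt I := by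
      intro h t
      rcases le_or_gt t δ with hle | hgt
      · exact segAt_down hmon hbor hsat he1 hx1 (δ - t) t
          (by rw [show t + (δ - t) = δ by omega]; exact h)
      · have := segAt_up hmon hbor hsat he1 hx1 hδ (t - δ) h
        rwa [show δ + (t - δ) = t by omega] at this
    have down : ∀ s t : ℕ, t ≤ s → IsSegmentAt ord.lt I s → IsSegmentAt ord.lt I t := by
      intro s t hts h
      exact segAt_down hmon hbor hsat he1 hx1 (s - t) t
        (by rw [show t + (s - t) = s by omega]; exact h)
    exact ⟨A, ⟨fun h => h r, fun h => A (down r δ hδr h)⟩,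
      ⟨fun h => down r δ hδr h, fun h => A h r⟩⟩
end

section
/- For every positive integer d and every term order ≺ on the terms of S = K[x_0,…,x_n] (n ≥ 1), there exists exactly one saturated segment ideal I ⊆ S with respect to ≺ whose Hilbert polynomial is the constant polynomial p(z) = d. -/
open Polynomial

attribute [local instance] Classical.propDecidable

namespace Seg

variable {n : ℕ}

lemma deg_add (α β : Expo n) : deg (α + β) = deg α + deg β := by
  simp [deg, Finset.sum_add_distrib]

lemma deg_sing (i : Fin (n + 1)) : deg (sing i) = 1 := by
  simp [deg, sing]

lemma deg_smul (k : ℕ) (α : Expo n) : deg (k • α) = k * deg α := by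
  simp [deg, Finset.mul_sum]

lemma deg_eq_zero {α : Expo n} (h : deg α = 0) : α = 0 := by
  funext i
  have := Finset.sum_eq_zero_iff.mp h i (Finset.mem_univ i)
  simpa using this

lemma exists_decomp {γ : Expo n} (h : γ ≠ 0) :
    ∃ (i : Fin (n + 1)) (δ : Expo n), γ i ≠ 0 ∧ γ = δ + sing i ∧ deg δ + 1 = deg γ := by
  have : ∃ i, γ i ≠ 0 := by
    by_contra hc
    push_neg at hc
    exact h (funext fun i => hc i)
  obtain ⟨i, hi⟩ := this
  refine ⟨i, γ - sing i, hi, ?_, ?_⟩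
  · funext j
    by_cases hj : j = i
    · subst hj
      simp [sing, Pi.single_apply]
      omega
    · simp [sing, Pi.single_apply, hj]
  · have hγ : γ = (γ - sing i) + sing i := by
      funext j
      by_cases hj : j = i
      · subst hj; simp [sing, Pi.single_apply]; omega
      · simp [sing, Pi.single_apply, hj]
    conv_rhs => rw [hγ]
    rw [deg_add, deg_sing]

lemma finite_deg (t : ℕ) : {α : Expo n | deg α = t}.Finite := by
  apply Set.Finite.subset (Set.Finite.pi (fun i : Fin (n+1) => Set.finite_Iic t))
  intro α hα
  have hat : deg α = t := hα
  simp only [Set.mem_pi, Set.mem_univ, Set.mem_Iic, forall_true_left]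
  intro i
  have : α i ≤ deg α := Finset.single_le_sum (fun j _ => Nat.zero_le _) (Finset.mem_univ i)
  omega


variable (ord : TermOrder n)

lemma asymm {a b : Expo n} (h : ord.lt a b) : ¬ ord.lt b a :=
  fun h' => ord.irrefl a (ord.trans _ _ _ h h')

lemma lt_add_left {a b : Expo n} (c : Expo n) (h : ord.lt a b) : ord.lt (c + a) (c + b) := by
  rw [add_comm c a, add_comm c b]; exact ord.add_right _ _ _ h

lemma lt_of_add_right {a b c : Expo n} (h : ord.lt (a + c) (b + c)) : ord.lt a b := by
  rcases eq_or_ne a b with rfl | hne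
  · exact absurd h (ord.irrefl _)
  · rcases ord.total a b hne with h' | h'
    · exact h'
    · exact absurd (ord.add_right _ _ c h') (asymm ord h)

/-- weak inequality for the term order -/
def ole (a b : Expo n) : Prop := a = b ∨ ord.lt a b

lemma ole_add_right {a b : Expo n} (c : Expo n) (h : ole ord a b) : ole ord (a + c) (b + c) := by
  rcases h with rfl | h
  · exact Or.inl rfl
  · exact Or.inr (ord.add_right _ _ _ h)

lemma lt_of_lt_of_ole {a b c : Expo n} (h : ord.lt a b) (h' : ole ord b c) : ord.lt a c := by
  rcases h' with rfl | h'
  · exact h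
  · exact ord.trans _ _ _ h h'

section
variable (hn : 1 ≤ n)

/-- the index `1` -/
def fin1 : Fin (n + 1) := ⟨1, by omega⟩

lemma fin1_ne_zero : fin1 hn ≠ (0 : Fin (n + 1)) := by
  simp [fin1, Fin.ext_iff]

lemma nsmul_lt : ∀ k : ℕ, ord.lt ((k + 1) • sing (0 : Fin (n + 1))) ((k + 1) • sing (fin1 hn)) := by
  intro k
  induction k with
  | zero => simpa using ord.var_lt 0 (fin1 hn) (by simp [fin1, Fin.lt_def])
  | succ k ih =>
      have h1 : ord.lt ((k + 1) • sing (0 : Fin (n+1)) + sing 0) ((k + 1) • sing (fin1 hn) + sing 0) :=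
        ord.add_right _ _ _ ih
      have h2 : ord.lt ((k + 1) • sing (fin1 hn) + sing 0) ((k + 1) • sing (fin1 hn) + sing (fin1 hn)) :=
        lt_add_left ord _ (ord.var_lt 0 (fin1 hn) (by simp [fin1, Fin.lt_def]))
      have h5 := ord.trans _ _ _ h1 h2
      rw [succ_nsmul (sing (0 : Fin (n+1))) (k+1), succ_nsmul (sing (fin1 hn)) (k+1)]
      exact h5

lemma sing_ole {i : Fin (n + 1)} (hi : i ≠ 0) : ole ord (sing (fin1 hn)) (sing i) := by
  rcases eq_or_ne i (fin1 hn) with rfl | hne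
  · exact Or.inl rfl
  · refine Or.inr (ord.var_lt _ _ ?_)
    rw [Fin.lt_def]
    have h0 : (i : ℕ) ≠ 0 := fun h => hi (Fin.ext h)
    have h1 : (i : ℕ) ≠ 1 := fun h => hne (Fin.ext (by simp [fin1, h]))
    simp [fin1]; omega

lemma x1pow_ole : ∀ (t : ℕ) (α : Expo n), deg α = t → α 0 = 0 →
    ole ord (deg α • sing (fin1 hn)) α := by
  intro t
  induction t with
  | zero =>
      intro α hdeg _
      have : α = 0 := deg_eq_zero hdeg
      subst this
      rw [hdeg]
      exact Or.inl (by simp)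
  | succ t ih =>
      intro α hdeg h0
      have hne : α ≠ 0 := by
        intro h; rw [h] at hdeg; simp [deg] at hdeg
      obtain ⟨i, δ, hi, hαd, hdegδ⟩ := exists_decomp hne
      have hi0 : i ≠ 0 := by
        intro h; subst h; exact hi h0
      have hδ0 : δ 0 = 0 := by
        have := congrFun hαd 0
        simp [sing, Pi.single_apply, Ne.symm hi0] at this
        omega
      have hdegδ' : deg δ = t := by omega
      have h1 : ole ord (deg δ • sing (fin1 hn)) δ := ih δ hdegδ' hδ0
      have h2 : ole ord (deg δ • sing (fin1 hn) + sing (fin1 hn)) (δ + sing (fin1 hn)) :=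
        ole_add_right ord _ h1
      have h3 : ole ord (δ + sing (fin1 hn)) (δ + sing i) := by
        rcases sing_ole ord hn hi0 with h | h
        · exact Or.inl (by rw [h])
        · exact Or.inr (lt_add_left ord _ h)
      have h4 : ole ord (deg δ • sing (fin1 hn) + sing (fin1 hn)) (δ + sing i) := by
        rcases h2 with h2 | h2
        · rw [h2]; exact h3
        · rcases h3 with h3 | h3
          · exact Or.inr (h3 ▸ h2)
          · exact Or.inr (ord.trans _ _ _ h2 h3)
      rw [hαd, deg_add, deg_sing, succ_nsmul (sing (fin1 hn)) (deg δ)]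
      exact h4

end

variable (d : ℕ)

/-- terms of the same degree strictly below `σ` -/
def below (σ : Expo n) : Set (Expo n) := {τ | deg τ = deg σ ∧ ord.lt τ σ}

lemma below_finite (σ : Expo n) : (below ord σ).Finite :=
  (finite_deg (deg σ)).subset (fun τ h => h.1)

/-- `σ` is among the `d` smallest terms of its degree -/
def small (σ : Expo n) : Prop := (below ord σ).ncard < d

lemma small_anti {τ σ : Expo n} (hdeg : deg τ = deg σ) (hlt : ord.lt τ σ)
    (h : small ord d σ) : small ord d τ := by
  have hsub : below ord τ ⊆ below ord σ := by
    intro μ hμ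
    exact ⟨hμ.1.trans hdeg, ord.trans _ _ _ hμ.2 hlt⟩
  exact lt_of_le_of_lt (Set.ncard_le_ncard hsub (below_finite ord σ)) h

lemma not_small_add {α : Expo n} (i : Fin (n+1)) (h : ¬ small ord d α) :
    ¬ small ord d (α + sing i) := by
  simp only [small, not_lt] at h ⊢
  have himg : (fun μ => μ + sing i) '' below ord α ⊆ below ord (α + sing i) := by
    rintro _ ⟨μ, hμ, rfl⟩
    exact ⟨by rw [deg_add, deg_add, hμ.1], ord.add_right _ _ _ hμ.2⟩
  have hinj : Set.InjOn (fun μ => μ + sing i) (below ord α) :=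
    fun a _ b _ hab => by simpa using add_left_injective (sing i) hab
  calc d ≤ (below ord α).ncard := h
    _ = ((fun μ => μ + sing i) '' below ord α).ncard := (Set.ncard_image_of_injOn hinj).symm
    _ ≤ (below ord (α + sing i)).ncard := Set.ncard_le_ncard himg (below_finite ord _)

lemma not_small_add_any {α : Expo n} (h : ¬ small ord d α) (γ : Expo n) :
    ¬ small ord d (α + γ) := by
  obtain ⟨t, ht⟩ : ∃ t, deg γ = t := ⟨deg γ, rfl⟩
  induction t generalizing γ with
  | zero => rw [deg_eq_zero ht]; simpa using h
  | succ t ih =>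
      have hne : γ ≠ 0 := by intro hz; rw [hz] at ht; simp [deg] at ht
      obtain ⟨i, δ, _, rfl, hdeg⟩ := exists_decomp hne
      rw [← add_assoc]
      exact not_small_add ord d i (ih δ (by omega))

lemma small_of_small_add {τ : Expo n} (i : Fin (n+1)) (h : small ord d (τ + sing i)) :
    small ord d τ := by
  by_contra hc
  exact not_small_add ord d i hc h

/-- the `b`-th smallest "candidate" term of degree `t` : `x_0^{t-b} x_1^b` -/
def mu (hn : 1 ≤ n) (t b : ℕ) : Expo n := (t - b) • sing 0 + b • sing (fin1 hn)

lemma mu_deg (hn : 1 ≤ n) {t b : ℕ} (hb : b ≤ t) : deg (mu hn t b) = t := by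
  rw [mu, deg_add, deg_smul, deg_smul, deg_sing, deg_sing]
  omega

lemma mu_apply1 (hn : 1 ≤ n) (t b : ℕ) : mu hn t b (fin1 hn) = b := by
  simp [mu, sing, Pi.single_apply, fin1_ne_zero hn, Ne.symm (fin1_ne_zero hn)]

lemma mu_lt (hn : 1 ≤ n) {t b : ℕ} (hb : b < t) : ord.lt (mu hn t b) (t • sing (fin1 hn)) := by
  have h1 : ord.lt ((t - b) • sing (0 : Fin (n+1))) ((t - b) • sing (fin1 hn)) := by
    obtain ⟨m, hm⟩ : ∃ m, t - b = m + 1 := ⟨t - b - 1, by omega⟩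
    rw [hm]; exact nsmul_lt ord hn m
  have h2 : ord.lt ((t - b) • sing (0 : Fin (n+1)) + b • sing (fin1 hn))
      ((t - b) • sing (fin1 hn) + b • sing (fin1 hn)) := ord.add_right _ _ _ h1
  have h3 : (t - b) • sing (fin1 hn) + b • sing (fin1 hn) = t • sing (fin1 hn) := by
    rw [← add_nsmul]; congr 1; omega
  rw [mu, ← h3]; exact h2

lemma not_small_of_ge (hn : 1 ≤ n) {σ : Expo n} (ht : d ≤ deg σ)
    (hge : ole ord ((deg σ) • sing (fin1 hn)) σ) : ¬ small ord d σ := by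
  simp only [small, not_lt]
  have hsub : ↑((Finset.range d).image (mu hn (deg σ))) ⊆ below ord σ := by
    intro τ hτ
    simp only [Finset.coe_image, Set.mem_image, Finset.mem_coe, Finset.mem_range] at hτ
    obtain ⟨b, hb, rfl⟩ := hτ
    have hblt : b < deg σ := lt_of_lt_of_le hb ht
    exact ⟨mu_deg hn (le_of_lt hblt), lt_of_lt_of_ole ord (mu_lt ord hn hblt) hge⟩
  have hcard : ((Finset.range d).image (mu hn (deg σ))).card = d := by
    rw [Finset.card_image_of_injOn, Finset.card_range]
    intro a _ b _ hab
    have := congrFun hab (fin1 hn)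
    rwa [mu_apply1, mu_apply1] at this
  calc d = (((Finset.range d).image (mu hn (deg σ)) : Finset (Expo n)) : Set (Expo n)).ncard := by
        rw [Set.ncard_coe_finset, hcard]
    _ ≤ (below ord σ).ncard := Set.ncard_le_ncard hsub (below_finite ord σ)

lemma small_lt_x1pow (hn : 1 ≤ n) {τ : Expo n} (ht : d ≤ deg τ) (hτ : small ord d τ) :
    ord.lt τ ((deg τ) • sing (fin1 hn)) := by
  by_contra hc
  refine not_small_of_ge ord d hn ht ?_ hτ
  rcases eq_or_ne ((deg τ) • sing (fin1 hn)) τ with h | h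
  · exact Or.inl h
  · rcases ord.total _ _ h with h' | h'
    · exact Or.inr h'
    · exact absurd h' hc

lemma small_add_zero (hn : 1 ≤ n) {τ : Expo n} (ht : d ≤ deg τ) (hτ : small ord d τ) :
    small ord d (τ + sing 0) := by
  set t := deg τ with htdef
  have hτlt : ord.lt τ (t • sing (fin1 hn)) := small_lt_x1pow ord d hn ht hτ
  have hσlt : ord.lt (τ + sing 0) ((t + 1) • sing (fin1 hn)) := by
    have h1 : ord.lt (τ + sing 0) (t • sing (fin1 hn) + sing 0) := ord.add_right _ _ _ hτlt
    have h2 : ord.lt (t • sing (fin1 hn) + sing 0) (t • sing (fin1 hn) + sing (fin1 hn)) :=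
      lt_add_left ord _ (ord.var_lt 0 (fin1 hn) (by simp [fin1, Fin.lt_def]))
    rw [succ_nsmul (sing (fin1 hn)) t]
    exact ord.trans _ _ _ h1 h2
  have hpos : ∀ ρ ∈ below ord (τ + sing 0), ρ 0 ≠ 0 := by
    intro ρ hρ h0
    have hdρ : deg ρ = t + 1 := by
      rw [hρ.1, deg_add, deg_sing]
    have := x1pow_ole ord hn (deg ρ) ρ rfl h0
    rw [hdρ] at this
    have hlt : ord.lt ρ ((t+1) • sing (fin1 hn)) := ord.trans _ _ _ hρ.2 hσlt
    rcases this with h | h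
    · rw [← h] at hlt; exact ord.irrefl _ hlt
    · exact ord.irrefl _ (ord.trans _ _ _ hlt h)
  have hmaps : (fun ρ : Expo n => ρ - sing 0) '' below ord (τ + sing 0) ⊆ below ord τ := by
    rintro _ ⟨ρ, hρ, rfl⟩
    have h0 : ρ 0 ≠ 0 := hpos ρ hρ
    have hrec : (ρ - sing 0) + sing 0 = ρ := by
      funext j
      by_cases hj : j = 0
      · subst hj; simp [sing, Pi.single_apply]; omega
      · simp [sing, Pi.single_apply, hj]
    constructor
    · show deg (ρ - sing 0) = deg τ
      have : deg ((ρ - sing 0) + sing 0) = deg (τ + sing 0) := by rw [hrec]; exact hρ.1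
      rw [deg_add, deg_add, deg_sing] at this
      omega
    · apply lt_of_add_right ord (c := sing 0)
      rw [hrec]; exact hρ.2
  have hinj : Set.InjOn (fun ρ : Expo n => ρ - sing 0) (below ord (τ + sing 0)) := by
    intro a ha b hb hab
    have ha0 : a 0 ≠ 0 := hpos a ha
    have hb0 : b 0 ≠ 0 := hpos b hb
    funext j
    have := congrFun hab j
    by_cases hj : j = 0
    · subst hj; simp [sing, Pi.single_apply] at this; omega
    · simpa [sing, Pi.single_apply, hj] using this
  have : (below ord (τ + sing 0)).ncard ≤ (below ord τ).ncard := by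
    rw [← Set.ncard_image_of_injOn hinj]
    exact Set.ncard_le_ncard hmaps (below_finite ord τ)
  exact lt_of_le_of_lt this hτ

lemma small_add_zero_iff (hn : 1 ≤ n) {τ : Expo n} (ht : d ≤ deg τ) :
    small ord d (τ + sing 0) ↔ small ord d τ :=
  ⟨small_of_small_add ord d 0, small_add_zero ord d hn ht⟩

lemma small_add_nsmul_iff (hn : 1 ≤ n) {α : Expo n} (ht : d ≤ deg α) (k : ℕ) :
    small ord d (α + k • sing 0) ↔ small ord d α := by
  induction k with
  | zero => simp
  | succ k ih =>
      have he : α + (k+1) • sing (0 : Fin (n+1)) = (α + k • sing 0) + sing 0 := by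
        rw [succ_nsmul, add_assoc]
      rw [he, small_add_zero_iff ord d hn (by rw [deg_add, deg_smul, deg_sing]; omega), ih]

/-- the finset of all terms of degree `t` -/
noncomputable def Ft (t : ℕ) : Finset (Expo n) := (finite_deg (n := n) t).toFinset

lemma mem_Ft {t : ℕ} {α : Expo n} : α ∈ Ft (n := n) t ↔ deg α = t := by
  simp [Ft]

lemma card_small_filter (hn : 1 ≤ n) {t : ℕ} (ht : d ≤ t) :
    ((Ft t).filter (fun σ => small ord d σ)).card = d := by
  classical
  set F : Finset (Expo n) := Ft t with hF
  set rank : Expo n → ℕ := fun σ => (F.filter (fun τ => ord.lt τ σ)).card with hrank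
  have hsmall_iff : ∀ σ ∈ F, (small ord d σ ↔ rank σ < d) := by
    intro σ hσ
    have hσt : deg σ = t := mem_Ft.mp hσ
    have hbe : below ord σ = ↑(F.filter (fun τ => ord.lt τ σ)) := by
      ext τ
      simp only [below, Set.mem_setOf_eq, Finset.coe_filter, hF, mem_Ft, hσt]
    unfold small
    rw [hbe, Set.ncard_coe_finset]
  have hrlt : ∀ σ ∈ F, rank σ < F.card := by
    intro σ hσ
    have hsub : F.filter (fun τ => ord.lt τ σ) ⊆ F.erase σ := by
      intro τ hτ
      rw [Finset.mem_filter] at hτ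
      refine Finset.mem_erase.mpr ⟨?_, hτ.1⟩
      rintro rfl
      exact ord.irrefl _ hτ.2
    have h1 := Finset.card_le_card hsub
    rw [Finset.card_erase_of_mem hσ] at h1
    have hpos : 0 < F.card := Finset.card_pos.mpr ⟨σ, hσ⟩
    show (F.filter (fun τ => ord.lt τ σ)).card < F.card
    omega
  have hkey : ∀ a ∈ F, ∀ b ∈ F, ord.lt a b → rank a < rank b := by
    intro a ha b hb h
    apply Finset.card_lt_card
    constructor
    · intro τ hτ
      rw [Finset.mem_filter] at hτ ⊢
      exact ⟨hτ.1, ord.trans _ _ _ hτ.2 h⟩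
    · intro hsub
      have : a ∈ F.filter (fun τ => ord.lt τ b) := Finset.mem_filter.mpr ⟨ha, h⟩
      have := Finset.mem_filter.mp (hsub this)
      exact ord.irrefl _ this.2
  have hinj : Set.InjOn rank ↑F := by
    intro a ha b hb hab
    by_contra hne
    rcases ord.total a b hne with h | h
    · exact absurd hab (Nat.ne_of_lt (hkey a ha b hb h))
    · exact absurd hab.symm (Nat.ne_of_lt (hkey b hb a ha h))
  have himg : F.image rank = Finset.range F.card := by
    apply Finset.eq_of_subset_of_card_le
    · intro m hm
      rw [Finset.mem_image] at hm
      obtain ⟨σ, hσ, rfl⟩ := hm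
      exact Finset.mem_range.mpr (hrlt σ hσ)
    · rw [Finset.card_range, Finset.card_image_of_injOn hinj]
  have hdF : d ≤ F.card := by
    have hc : ((Finset.range d).image (mu hn t)).card = d := by
      rw [Finset.card_image_of_injOn, Finset.card_range]
      intro a _ b _ hab
      have := congrFun hab (fin1 hn)
      rwa [mu_apply1, mu_apply1] at this
    rw [← hc]
    apply Finset.card_le_card
    intro τ hτ
    rw [Finset.mem_image] at hτ
    obtain ⟨b, hb, rfl⟩ := hτ
    rw [Finset.mem_range] at hb
    exact (mem_Ft (n := n)).mpr (mu_deg hn (by omega))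
  have hfc : F.filter (fun σ => small ord d σ) = F.filter (fun σ => rank σ < d) :=
    Finset.filter_congr (fun σ hσ => by rw [hsmall_iff σ hσ])
  rw [hfc]
  have hcard1 : (F.filter (fun σ => rank σ < d)).card
      = ((F.filter (fun σ => rank σ < d)).image rank).card := by
    rw [Finset.card_image_of_injOn (hinj.mono (by exact_mod_cast Finset.filter_subset _ F))]
  have himg2 : (F.filter (fun σ => rank σ < d)).image rank
      = (Finset.range F.card).filter (fun m => m < d) := by
    rw [← Finset.filter_image (p := fun m => m < d), himg]
  have hrange : (Finset.range F.card).filter (fun m => m < d) = Finset.range d := by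
    ext m
    simp only [Finset.mem_filter, Finset.mem_range]
    omega
  rw [hcard1, himg2, hrange, Finset.card_range]

lemma dc_subset {t : ℕ} (A B : Finset (Expo n)) (hA : A ⊆ Ft t) (hB : B ⊆ Ft t)
    (dcA : ∀ σ ∈ A, ∀ τ ∈ Ft (n := n) t, ord.lt τ σ → τ ∈ A)
    (dcB : ∀ σ ∈ B, ∀ τ ∈ Ft (n := n) t, ord.lt τ σ → τ ∈ B)
    (hcard : A.card ≤ B.card) : A ⊆ B := by
  intro σ hσA
  by_contra hσB
  have hBsub : B ⊆ A.erase σ := by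
    intro τ hτ
    have hne : τ ≠ σ := fun h => hσB (h ▸ hτ)
    rcases ord.total τ σ hne with h | h
    · exact Finset.mem_erase.mpr ⟨hne, dcA σ hσA τ (hB hτ) h⟩
    · exact absurd (dcB τ hτ σ (hA hσA) h) hσB
  have h1 := Finset.card_le_card hBsub
  rw [Finset.card_erase_of_mem hσA] at h1
  have hpos : 0 < A.card := Finset.card_pos.mpr ⟨σ, hσA⟩
  omega

lemma dc_eq {t : ℕ} (A B : Finset (Expo n)) (hA : A ⊆ Ft t) (hB : B ⊆ Ft t)
    (dcA : ∀ σ ∈ A, ∀ τ ∈ Ft (n := n) t, ord.lt τ σ → τ ∈ A)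
    (dcB : ∀ σ ∈ B, ∀ τ ∈ Ft (n := n) t, ord.lt τ σ → τ ∈ B)
    (hcard : A.card = B.card) : A = B :=
  Finset.Subset.antisymm (dc_subset ord A B hA hB dcA dcB (le_of_eq hcard))
    (dc_subset ord B A hB hA dcB dcA (le_of_eq hcard.symm))
end Seg

/-- For every positive integer `d` and every term order `≺` there is exactly
one saturated segment ideal w.r.t. `≺` with constant Hilbert polynomial `d`. -/
theorem unique_saturated_segment_ideal {n : ℕ} (hn : 1 ≤ n) (d : ℕ) (hd : 0 < d)
    (ord : TermOrder n) :
    ∃! I : Set (Expo n), IsMonIdeal I ∧ IsSaturatedIdeal I ∧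
      IsSegmentIdeal ord.lt I ∧ HasHilbPoly I (Polynomial.C (d : ℚ)) := by
  classical
  set I : Set (Expo n) := {α | ¬ Seg.small ord d (α + d • sing 0)} with hI
  have hdegshift : ∀ (α : Expo n) (k : ℕ) (i : Fin (n+1)),
      deg (α + k • sing i) = deg α + k := by
    intro α k i
    rw [Seg.deg_add, Seg.deg_smul, Seg.deg_sing, mul_one]
  have hnotI : ∀ α : Expo n, d ≤ deg α → (α ∉ I ↔ Seg.small ord d α) := by
    intro α h
    simp only [hI, Set.mem_setOf_eq, not_not]
    exact Seg.small_add_nsmul_iff ord d hn h d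
  have hIset : ∀ t, d ≤ t →
      coIdeal I t = ↑((Seg.Ft (n := n) t).filter (fun σ => Seg.small ord d σ)) := by
    intro t ht
    ext α
    simp only [coIdeal, Set.mem_setOf_eq, Finset.coe_filter, Seg.mem_Ft]
    constructor
    · rintro ⟨hdeg, hmem⟩
      exact ⟨hdeg, (hnotI α (by omega)).mp hmem⟩
    · rintro ⟨hdeg, hsm⟩
      exact ⟨hdeg, (hnotI α (by omega)).mpr hsm⟩
  have hImon : IsMonIdeal I := by
    intro α hα γ
    show ¬ Seg.small ord d ((α + γ) + d • sing 0)
    rw [add_right_comm]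
    exact Seg.not_small_add_any ord d hα γ
  have hIsat : IsSaturatedIdeal I := by
    intro α h
    obtain ⟨k, hk⟩ := h 0
    show ¬ Seg.small ord d (α + d • sing 0)
    intro hs
    apply hk
    show Seg.small ord d (α + k • sing 0 + d • sing 0)
    rw [add_right_comm]
    refine (Seg.small_add_nsmul_iff ord d hn ?_ k).mpr hs
    rw [hdegshift]
    omega
  have hIseg : IsSegmentIdeal ord.lt I := by
    intro t τ σ hτ hdτ hdσ hlt
    show ¬ Seg.small ord d (σ + d • sing 0)
    intro hs
    apply hτ
    refine Seg.small_anti ord d ?_ (ord.add_right _ _ _ hlt) hs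
    rw [hdegshift, hdegshift, hdτ, hdσ]
  have hIhilb : HasHilbPoly I (Polynomial.C (d : ℚ)) := by
    refine ⟨d, fun t ht => ?_⟩
    rw [hIset t ht, Set.ncard_coe_finset, Seg.card_small_filter ord d hn ht,
      Polynomial.eval_C]
  refine ⟨I, ⟨hImon, hIsat, hIseg, hIhilb⟩, ?_⟩
  rintro J ⟨hJmon, hJsat, hJseg, N, hN⟩
  set T := max N d with hT
  have hcoeq : ∀ t, T ≤ t → coIdeal J t = coIdeal I t := by
    intro t ht
    have htd : d ≤ t := le_trans (le_max_right N d) ht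
    have htN : N ≤ t := le_trans (le_max_left N d) ht
    set A : Finset (Expo n) := (Seg.Ft (n := n) t).filter (fun α => α ∉ J) with hA
    set B : Finset (Expo n) := (Seg.Ft (n := n) t).filter (fun σ => Seg.small ord d σ) with hB
    have hAco : coIdeal J t = ↑A := by
      ext α
      simp only [coIdeal, Set.mem_setOf_eq, hA, Finset.coe_filter, Seg.mem_Ft]
    have hcardA : A.card = d := by
      have h1 := hN t htN
      rw [Polynomial.eval_C] at h1
      have h2 : (coIdeal J t).ncard = d := by exact_mod_cast h1
      rw [hAco, Set.ncard_coe_finset] at h2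
      exact h2
    have hcardB : B.card = d := Seg.card_small_filter ord d hn htd
    have dcA : ∀ σ ∈ A, ∀ τ ∈ Seg.Ft (n := n) t, ord.lt τ σ → τ ∈ A := by
      intro σ hσ τ hτ hlt
      rw [hA, Finset.mem_filter] at hσ ⊢
      refine ⟨hτ, fun hτJ => hσ.2 ?_⟩
      exact hJseg t τ σ hτJ (Seg.mem_Ft.mp hτ) (Seg.mem_Ft.mp hσ.1) hlt
    have dcB : ∀ σ ∈ B, ∀ τ ∈ Seg.Ft (n := n) t, ord.lt τ σ → τ ∈ B := by
      intro σ hσ τ hτ hlt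
      rw [hB, Finset.mem_filter] at hσ ⊢
      refine ⟨hτ, ?_⟩
      exact Seg.small_anti ord d (by rw [Seg.mem_Ft.mp hτ, Seg.mem_Ft.mp hσ.1]) hlt hσ.2
    have hAB : A = B := Seg.dc_eq ord A B (Finset.filter_subset _ _) (Finset.filter_subset _ _)
      dcA dcB (by rw [hcardA, hcardB])
    rw [hAco, hAB, ← hIset t htd]
  ext α
  constructor
  · intro hαJ
    apply hIsat α
    intro i
    refine ⟨T, ?_⟩
    have hmem : α + T • sing i ∈ J := hJmon α hαJ _
    have hdeg : deg (α + T • sing i) = deg α + T := hdegshift α T i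
    have hTt : T ≤ deg α + T := by omega
    have hnc : α + T • sing i ∉ coIdeal J (deg α + T) := by
      intro hc
      exact hc.2 hmem
    rw [hcoeq _ hTt] at hnc
    by_contra hni
    exact hnc ⟨hdeg, hni⟩
  · intro hαI
    apply hJsat α
    intro i
    refine ⟨T, ?_⟩
    have hmem : α + T • sing i ∈ I := hImon α hαI _
    have hdeg : deg (α + T • sing i) = deg α + T := hdegshift α T i
    have hTt : T ≤ deg α + T := by omega
    have hnc : α + T • sing i ∉ coIdeal I (deg α + T) := by
      intro hc
      exact hc.2 hmem
    rw [← hcoeq _ hTt] at hnc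
    by_contra hnj
    exact hnc ⟨hdeg, hnj⟩
end
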